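/- Let d ≥ 1, M ≥ 0, c₀ > 0, θ_c > 0. Let D : ℝ^{d×d} → ℝ^{d×d} be a linear map such that D(A) is symmetric for every A, D is self-adjoint with respect to the Frobenius inner product, and c₀ |A|² ≤ D(A) : A for every symmetric A; set Ċ := Ḟᵀ F + Fᵀ Ḟ and ξ(F, Ḟ) := D(Ċ) : Ċ. Let W : GL⁺(d) × (0, ∞) → ℝ satisfy: for each θ > 0 the map F ↦ W(F, θ) is differentiable on GL⁺(d) with Fréchet derivative represented by a matrix S(F, θ) (i.e. the derivative applied to G equals S(F, θ) : G); W(QF, θ) = W(F, θ) for all Q ∈ SO(d), F ∈ GL⁺(d), θ > 0; for each F ∈ GL⁺(d) the map θ ↦ S(F, θ) is differentiable on (0, ∞) with ‖S(F, θ)‖ ≤ M(1 + |F|) and ‖∂_θ S(F, θ)‖ ≤ M(1 + |F|) / max(θ, 1) for all θ > 0. Then for all F ∈ GL⁺(d), Ḟ ∈ ℝ^{d×d}, and θ > 0: |(S(F, θ) − S(F, θ_c)) : Ḟ| ≤ (M / √c₀) · |F⁻¹| · (1 + |F|) · min(|θ − θ_c|, 1) · ξ(F, Ḟ)^{1/2}.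 -/

import Mathlib

attribute [local instance] Matrix.frobeniusNormedAddCommGroup Matrix.frobeniusNormedSpace

open Matrix

section Aux

variable {d : ℕ}

private lemma frob_sq' (A : Matrix (Fin d) (Fin d) ℝ) :
    ‖A‖ ^ 2 = ∑ i, ∑ j, (A i j) ^ 2 := by
  rw [Matrix.frobenius_norm_def, ← Real.rpow_natCast _ 2, ← Real.rpow_mul (by positivity)]
  norm_num [Real.norm_eq_abs, sq_abs]

private lemma trace_form' (A B : Matrix (Fin d) (Fin d) ℝ) :
    Matrix.trace (Aᵀ * B) = ∑ p : Fin d × Fin d, A p.1 p.2 * B p.1 p.2 := by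
  rw [Matrix.trace, Fintype.sum_prod_type]
  simp [Matrix.diag, Matrix.mul_apply, Matrix.transpose_apply]
  rw [Finset.sum_comm]

private lemma trace_cs' (A B : Matrix (Fin d) (Fin d) ℝ) :
    |Matrix.trace (Aᵀ * B)| ≤ ‖A‖ * ‖B‖ := by
  have h := Finset.sum_mul_sq_le_sq_mul_sq Finset.univ
    (fun p : Fin d × Fin d => A p.1 p.2) (fun p => B p.1 p.2)
  have hA : ∑ p : Fin d × Fin d, (A p.1 p.2)^2 = ‖A‖^2 := by
    rw [frob_sq', Fintype.sum_prod_type]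
  have hB : ∑ p : Fin d × Fin d, (B p.1 p.2)^2 = ‖B‖^2 := by
    rw [frob_sq', Fintype.sum_prod_type]
  rw [trace_form', abs_le]
  refine abs_le_of_sq_le_sq' ?_ (by positivity)
  calc (∑ p : Fin d × Fin d, A p.1 p.2 * B p.1 p.2)^2
      ≤ (∑ p : Fin d × Fin d, (A p.1 p.2)^2) * (∑ p : Fin d × Fin d, (B p.1 p.2)^2) := h
    _ = (‖A‖ * ‖B‖)^2 := by rw [hA, hB, mul_pow]

private lemma trace_self' (A : Matrix (Fin d) (Fin d) ℝ) :
    Matrix.trace (Aᵀ * A) = ‖A‖ ^ 2 := by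
  rw [trace_form', frob_sq', Fintype.sum_prod_type]
  simp [sq]

section Exp

attribute [local instance] Matrix.frobeniusNormedRing Matrix.frobeniusNormedAlgebra

open NormedSpace

private lemma exp_skew_orth' (A : Matrix (Fin d) (Fin d) ℝ) (hA : Aᵀ = -A) (t : ℝ) :
    (exp (t • A))ᵀ * exp (t • A) = 1 := by
  have h1 : (exp (t • A))ᵀ = exp (-(t • A)) := by
    rw [← Matrix.exp_transpose, transpose_smul, hA, smul_neg]
  rw [h1, ← Matrix.exp_add_of_commute (-(t • A)) (t • A) (Commute.neg_left (Commute.refl _)),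
    neg_add_cancel, exp_zero]

private lemma exp_skew_det' (A : Matrix (Fin d) (Fin d) ℝ) (hA : Aᵀ = -A) (t : ℝ) :
    (exp (t • A)).det = 1 := by
  set f : ℝ → ℝ := fun s => (exp (s • A)).det with hf
  have hcont : Continuous f := Continuous.matrix_det (exp_continuous.comp (by continuity))
  have hne : ∀ s, f s ≠ 0 := by
    intro s
    have h : exp (s • A) * exp (-(s • A)) = 1 := by
      rw [← Matrix.exp_add_of_commute (s • A) (-(s • A)) (Commute.neg_right (Commute.refl _)),
        add_neg_cancel, exp_zero]
    have hd : f s * (exp (-(s • A))).det = 1 := by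
      rw [hf]; simp only [← Matrix.det_mul, h, Matrix.det_one]
    intro h0; rw [h0, zero_mul] at hd; exact zero_ne_one hd
  have hsq : f t ^ 2 = 1 := by
    have h := exp_skew_orth' A hA t
    have hdet := congrArg Matrix.det h
    rwa [Matrix.det_mul, Matrix.det_transpose, Matrix.det_one, ← sq] at hdet
  have f0 : f 0 = 1 := by simp [hf, exp_zero]
  have hfac : (f t - 1) * (f t + 1) = 0 := by ring_nf; nlinarith [hsq]
  rcases mul_eq_zero.mp hfac with h | h
  · linarith
  · exfalso
    have h0 : (0:ℝ) ∈ Set.Icc (f t) (f 0) := by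
      constructor
      · nlinarith
      · rw [f0]; norm_num
    obtain ⟨s, hs⟩ := intermediate_value_univ t 0 hcont h0
    exact hne s hs

/-- Frame indifference implies `S Fᵀ` is symmetric. -/
private lemma stress_symm' (W : Matrix (Fin d) (Fin d) ℝ → ℝ → ℝ)
    (S : Matrix (Fin d) (Fin d) ℝ → ℝ → Matrix (Fin d) (Fin d) ℝ)
    (hframe : ∀ (Q F : Matrix (Fin d) (Fin d) ℝ) (θ : ℝ),
      Qᵀ * Q = 1 → Q.det = 1 → 0 < F.det → 0 < θ → W (Q * F) θ = W F θ)
    (hS : ∀ (F : Matrix (Fin d) (Fin d) ℝ) (θ : ℝ), 0 < F.det → 0 < θ →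
      ∃ L : Matrix (Fin d) (Fin d) ℝ →L[ℝ] ℝ,
        HasFDerivAt (fun X => W X θ) L F ∧
        ∀ G : Matrix (Fin d) (Fin d) ℝ, L G = Matrix.trace ((S F θ)ᵀ * G))
    (F : Matrix (Fin d) (Fin d) ℝ) (θ : ℝ) (hF : 0 < F.det) (hθ : 0 < θ) :
    (S F θ * Fᵀ)ᵀ = S F θ * Fᵀ := by
  obtain ⟨L, hL, hLrep⟩ := hS F θ hF hθ
  -- for every skew-symmetric A, trace(Sᵀ (A F)) = 0
  have key : ∀ A : Matrix (Fin d) (Fin d) ℝ, Aᵀ = -A →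
      Matrix.trace ((S F θ)ᵀ * (A * F)) = 0 := by
    intro A hA
    have hc : HasDerivAt (fun t : ℝ => exp (t • A) * F) (A * F) 0 := by
      have h := (hasDerivAt_exp_smul_const (𝕂 := ℝ) A 0).mul_const F
      rw [zero_smul, exp_zero, one_mul] at h
      exact h
    have hg : HasDerivAt (fun t : ℝ => W (exp (t • A) * F) θ) (L (A * F)) 0 := by
      have hF0 : exp ((0:ℝ) • A) * F = F := by simp [exp_zero]
      have hL' : HasFDerivAt (fun X => W X θ) L (exp ((0:ℝ) • A) * F) := by
        rw [hF0]; exact hL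
      exact hL'.comp_hasDerivAt 0 hc
    have hconst : (fun t : ℝ => W (exp (t • A) * F) θ) = fun _ => W F θ := by
      funext t
      exact hframe _ _ _ (exp_skew_orth' A hA t) (exp_skew_det' A hA t) hF hθ
    have h0 : L (A * F) = 0 := by
      have h2 : HasDerivAt (fun t : ℝ => W (exp (t • A) * F) θ) 0 0 := by
        rw [hconst]; exact hasDerivAt_const _ _
      exact hg.unique h2
    rw [← hLrep]; exact h0
  -- apply to the skew part of X = S Fᵀ
  have main : ∀ X : Matrix (Fin d) (Fin d) ℝ, X = S F θ * Fᵀ → Xᵀ = X := by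
    intro X hX
    have hPskew : (X - Xᵀ)ᵀ = -(X - Xᵀ) := by
      rw [transpose_sub, transpose_transpose, neg_sub]
    have h0 := key (X - Xᵀ) hPskew
    have htr : Matrix.trace ((S F θ)ᵀ * ((X - Xᵀ) * F)) = Matrix.trace (Xᵀ * (X - Xᵀ)) := by
      rw [← Matrix.mul_assoc, Matrix.trace_mul_cycle]
      congr 1
      rw [hX, Matrix.transpose_mul, transpose_transpose, Matrix.mul_assoc]
    have e1 : Matrix.trace (X * Xᵀ) = Matrix.trace (Xᵀ * X) := Matrix.trace_mul_comm _ _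
    have e2 : Matrix.trace (X * X) = Matrix.trace (Xᵀ * Xᵀ) := by
      rw [← Matrix.trace_transpose (X * X), Matrix.transpose_mul]
    have h0' : Matrix.trace (Xᵀ * (X - Xᵀ)) = 0 := htr.symm.trans h0
    have hPP : Matrix.trace ((X - Xᵀ)ᵀ * (X - Xᵀ)) = 2 * Matrix.trace (Xᵀ * (X - Xᵀ)) := by
      rw [hPskew]
      simp only [Matrix.mul_sub, Matrix.sub_mul, Matrix.neg_mul, Matrix.mul_neg,
        Matrix.trace_sub, Matrix.trace_neg, transpose_transpose]
      linarith [e1, e2]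
    have hP0 : ‖X - Xᵀ‖ ^ 2 = 0 := by
      rw [← trace_self', hPP, h0', mul_zero]
    have hP : X - Xᵀ = 0 :=
      norm_eq_zero.mp (pow_eq_zero_iff (n := 2) (by norm_num) |>.mp hP0)
    exact (sub_eq_zero.mp hP).symm
  exact main _ rfl

end Exp

end Aux

/-- If `W(·, θ)` is frame indifferent with Fréchet derivative represented by
`S(F, θ)` (Frobenius inner product), `θ ↦ S(F, θ)` is differentiable with
`‖S(F,θ)‖ ≤ M(1+|F|)` and `‖∂_θ S(F,θ)‖ ≤ M(1+|F|)/max(θ,1)`, and the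
dissipation tensor `D` is symmetric-valued, self-adjoint and coercive with
constant `c₀`, then for all `F ∈ GL⁺(d)`, `Ḟ`, `θ > 0`:
`|(S(F,θ) − S(F,θ_c)) : Ḟ| ≤ (M/√c₀) |F⁻¹| (1+|F|) min(|θ−θ_c|,1) ξ(F,Ḟ)^{1/2}`. -/
theorem coupling_stress_difference_dissipation_bound {d : ℕ} (hd : 1 ≤ d)
    (M c₀ θc : ℝ) (hM : 0 ≤ M) (hc₀ : 0 < c₀) (hθc : 0 < θc)
    (D : Matrix (Fin d) (Fin d) ℝ →ₗ[ℝ] Matrix (Fin d) (Fin d) ℝ)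
    (hDsymm : ∀ A : Matrix (Fin d) (Fin d) ℝ, (D A)ᵀ = D A)
    (hDadj : ∀ A B : Matrix (Fin d) (Fin d) ℝ,
      Matrix.trace ((D A)ᵀ * B) = Matrix.trace (Aᵀ * D B))
    (hDcoerc : ∀ A : Matrix (Fin d) (Fin d) ℝ, Aᵀ = A →
      c₀ * ‖A‖ ^ 2 ≤ Matrix.trace ((D A)ᵀ * A))
    (W : Matrix (Fin d) (Fin d) ℝ → ℝ → ℝ)
    (S Sθ : Matrix (Fin d) (Fin d) ℝ → ℝ → Matrix (Fin d) (Fin d) ℝ)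
    (hframe : ∀ (Q F : Matrix (Fin d) (Fin d) ℝ) (θ : ℝ),
      Qᵀ * Q = 1 → Q.det = 1 → 0 < F.det → 0 < θ → W (Q * F) θ = W F θ)
    (hS : ∀ (F : Matrix (Fin d) (Fin d) ℝ) (θ : ℝ), 0 < F.det → 0 < θ →
      ∃ L : Matrix (Fin d) (Fin d) ℝ →L[ℝ] ℝ,
        HasFDerivAt (fun X => W X θ) L F ∧
        ∀ G : Matrix (Fin d) (Fin d) ℝ, L G = Matrix.trace ((S F θ)ᵀ * G))
    (hSθ : ∀ (F : Matrix (Fin d) (Fin d) ℝ) (θ : ℝ), 0 < F.det → 0 < θ →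
      HasDerivAt (fun t => S F t) (Sθ F θ) θ)
    (hSbd : ∀ (F : Matrix (Fin d) (Fin d) ℝ) (θ : ℝ), 0 < F.det → 0 < θ →
      ‖S F θ‖ ≤ M * (1 + ‖F‖))
    (hSθbd : ∀ (F : Matrix (Fin d) (Fin d) ℝ) (θ : ℝ), 0 < F.det → 0 < θ →
      ‖Sθ F θ‖ ≤ M * (1 + ‖F‖) / max θ 1) :
    ∀ (F Fdot : Matrix (Fin d) (Fin d) ℝ) (θ : ℝ), 0 < F.det → 0 < θ →
      |Matrix.trace ((S F θ - S F θc)ᵀ * Fdot)| ≤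
        M / Real.sqrt c₀ * ‖F⁻¹‖ * (1 + ‖F‖) * min |θ - θc| 1 *
          Real.sqrt
            (Matrix.trace ((D (Fdotᵀ * F + Fᵀ * Fdot))ᵀ * (Fdotᵀ * F + Fᵀ * Fdot))) := by
  intro F Fdot θ hF hθ
  set ΔS := S F θ - S F θc with hΔS
  set C := Fdotᵀ * F + Fᵀ * Fdot with hCdef
  set ξ := Matrix.trace ((D C)ᵀ * C) with hξdef
  have hu : IsUnit F.det := isUnit_iff_ne_zero.mpr (ne_of_gt hF)
  have huT : IsUnit Fᵀ.det := by rwa [Matrix.det_transpose]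
  have hinv1 : F⁻¹ * F = 1 := Matrix.nonsing_inv_mul F hu
  have hinv2 : F * F⁻¹ = 1 := Matrix.mul_nonsing_inv F hu
  have hinvT : Fᵀ * Fᵀ⁻¹ = 1 := Matrix.mul_nonsing_inv Fᵀ huT
  -- symmetry of ΔS * Fᵀ coming from frame indifference
  have hs1 := stress_symm' W S hframe hS F θ hF hθ
  have hs2 := stress_symm' W S hframe hS F θc hF hθc
  have hXsym : F * ΔSᵀ = ΔS * Fᵀ := by
    have h : (ΔS * Fᵀ)ᵀ = ΔS * Fᵀ := by
      rw [hΔS, Matrix.sub_mul, Matrix.transpose_sub, hs1, hs2]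
    calc F * ΔSᵀ = (ΔS * Fᵀ)ᵀ := by rw [Matrix.transpose_mul, transpose_transpose]
      _ = ΔS * Fᵀ := h
  set T := F⁻¹ * ΔS with hT
  have hTsym : Tᵀ = T := by
    calc Tᵀ = ΔSᵀ * Fᵀ⁻¹ := by
          rw [hT, Matrix.transpose_mul, Matrix.transpose_nonsing_inv]
      _ = (F⁻¹ * F) * (ΔSᵀ * Fᵀ⁻¹) := by rw [hinv1, Matrix.one_mul]
      _ = F⁻¹ * ((F * ΔSᵀ) * Fᵀ⁻¹) := by simp only [Matrix.mul_assoc]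
      _ = F⁻¹ * ((ΔS * Fᵀ) * Fᵀ⁻¹) := by rw [hXsym]
      _ = F⁻¹ * (ΔS * (Fᵀ * Fᵀ⁻¹)) := by simp only [Matrix.mul_assoc]
      _ = T := by rw [hinvT, Matrix.mul_one, hT]
  -- the key trace identity
  have ha : Tᵀ * Fᵀ = ΔSᵀ := by
    calc Tᵀ * Fᵀ = ΔSᵀ * ((F⁻¹)ᵀ * Fᵀ) := by
          rw [hT, Matrix.transpose_mul, Matrix.mul_assoc]
      _ = ΔSᵀ := by
          rw [← Matrix.transpose_mul, hinv2, Matrix.transpose_one, Matrix.mul_one]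
  have hb : F * Tᵀ = ΔS := by
    rw [hTsym, hT, ← Matrix.mul_assoc, hinv2, Matrix.one_mul]
  have hkey : Matrix.trace (Tᵀ * C) = 2 * Matrix.trace (ΔSᵀ * Fdot) := by
    calc Matrix.trace (Tᵀ * C)
        = Matrix.trace (Tᵀ * (Fdotᵀ * F)) + Matrix.trace (Tᵀ * (Fᵀ * Fdot)) := by
          rw [hCdef, Matrix.mul_add, Matrix.trace_add]
      _ = Matrix.trace (ΔSᵀ * Fdot) + Matrix.trace (ΔSᵀ * Fdot) := by
          congr 1
          · rw [← Matrix.mul_assoc, Matrix.trace_mul_cycle, hb,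
              ← Matrix.trace_transpose (ΔS * Fdotᵀ), Matrix.transpose_mul,
              transpose_transpose, Matrix.trace_mul_comm]
          · rw [← Matrix.mul_assoc, ha]
      _ = 2 * Matrix.trace (ΔSᵀ * Fdot) := by ring
  -- norm estimates
  have hTnorm : ‖T‖ ≤ ‖F⁻¹‖ * ‖ΔS‖ := Matrix.frobenius_norm_mul _ _
  have hCsym : Cᵀ = C := by
    rw [hCdef, Matrix.transpose_add, Matrix.transpose_mul, Matrix.transpose_mul,
      transpose_transpose, transpose_transpose, add_comm]
  have hcoerc := hDcoerc C hCsym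
  have hξ0 : (0:ℝ) ≤ ξ := le_trans (by positivity) hcoerc
  have hCnorm : ‖C‖ ≤ Real.sqrt ξ / Real.sqrt c₀ := by
    have h1 : ‖C‖ ^ 2 ≤ ξ / c₀ := (le_div_iff₀ hc₀).mpr (by linarith [hcoerc])
    calc ‖C‖ = Real.sqrt (‖C‖ ^ 2) := (Real.sqrt_sq (norm_nonneg _)).symm
      _ ≤ Real.sqrt (ξ / c₀) := Real.sqrt_le_sqrt h1
      _ = Real.sqrt ξ / Real.sqrt c₀ := Real.sqrt_div hξ0 _
  set B := M * (1 + ‖F‖) with hB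
  have hB0 : 0 ≤ B := mul_nonneg hM (by positivity)
  have hmvt : ‖S F θ - S F θc‖ ≤ B * |θ - θc| := by
    have h := Convex.norm_image_sub_le_of_norm_hasDerivWithin_le
      (f := fun t => S F t) (f' := Sθ F) (s := Set.Ioi (0:ℝ)) (C := B)
      (fun t ht => (hSθ F t hF ht).hasDerivWithinAt)
      (fun t ht => le_trans (hSθbd F t hF ht) (div_le_self hB0 (le_max_right t 1)))
      (convex_Ioi 0) (Set.mem_Ioi.mpr hθc) (Set.mem_Ioi.mpr hθ)
    simpa [Real.norm_eq_abs] using h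
  have htwo : ‖ΔS‖ ≤ 2 * B := by
    have h1 := hSbd F θ hF hθ
    have h2 := hSbd F θc hF hθc
    calc ‖ΔS‖ ≤ ‖S F θ‖ + ‖S F θc‖ := norm_sub_le _ _
      _ ≤ 2 * B := by rw [hB]; linarith
  have hhalf : ‖ΔS‖ / 2 ≤ B * min |θ - θc| 1 := by
    rcases le_total |θ - θc| 1 with h | h
    · rw [min_eq_left h]
      have h3 : ‖ΔS‖ ≤ B * |θ - θc| := hmvt
      have := mul_nonneg hB0 (abs_nonneg (θ - θc))
      linarith [norm_nonneg ΔS]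
    · rw [min_eq_right h, mul_one]; linarith
  -- assemble
  have hcs := trace_cs' T C
  have hmain : |Matrix.trace (ΔSᵀ * Fdot)| ≤ ‖F⁻¹‖ * (‖ΔS‖ / 2) * ‖C‖ := by
    have he : Matrix.trace (ΔSᵀ * Fdot) = Matrix.trace (Tᵀ * C) / 2 := by
      rw [hkey]; ring
    rw [he, abs_div, abs_two]
    calc |Matrix.trace (Tᵀ * C)| / 2 ≤ (‖T‖ * ‖C‖) / 2 := by linarith
      _ ≤ ((‖F⁻¹‖ * ‖ΔS‖) * ‖C‖) / 2 := by
          have := mul_le_mul_of_nonneg_right hTnorm (norm_nonneg C)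
          linarith
      _ = ‖F⁻¹‖ * (‖ΔS‖ / 2) * ‖C‖ := by ring
  have hmin0 : (0:ℝ) ≤ min |θ - θc| 1 := le_min (abs_nonneg _) zero_le_one
  calc |Matrix.trace (ΔSᵀ * Fdot)|
      ≤ ‖F⁻¹‖ * (‖ΔS‖ / 2) * ‖C‖ := hmain
    _ ≤ ‖F⁻¹‖ * (B * min |θ - θc| 1) * (Real.sqrt ξ / Real.sqrt c₀) := by
        apply mul_le_mul
        · exact mul_le_mul_of_nonneg_left hhalf (norm_nonneg _)
        · exact hCnorm
        · exact norm_nonneg _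
        · exact mul_nonneg (norm_nonneg _) (mul_nonneg hB0 hmin0)
    _ = M / Real.sqrt c₀ * ‖F⁻¹‖ * (1 + ‖F‖) * min |θ - θc| 1 * Real.sqrt ξ := by
        rw [hB]; ring
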